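/- Let A be an associative unital ℚ-algebra, let x, y ∈ A, set z := x*y − y*x, and assume x*z = z*x and y*z = z*y. Then for all r, t ∈ ℕ: (x^r / r!) * (y^t / t!) = ∑_{i=0}^{min(r,t)} (y^{t−i} / (t−i)!) * (x^{r−i} / (r−i)!) * (z^i / i!). -/
import Mathlib

open Finset

section Aux

variable {A : Type*} [Ring A] (x y z : A)

private lemma aux_xys (hyz : y * z = z * y) (hxy : x * y = y * x + z) (s : ℕ) :
    x * y ^ s = y ^ s * x + s • (y ^ (s - 1) * z) := by
  induction s with
  | zero => simp
  | succ n ih =>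
    have h0 : x * y ^ (n + 1) = (x * y ^ n) * y := by
      rw [pow_succ, ← mul_assoc]
    rw [h0, ih, add_mul, smul_mul_assoc]
    have h1 : y ^ n * x * y = y ^ (n + 1) * x + y ^ n * z := by
      rw [mul_assoc, hxy, mul_add, ← mul_assoc, ← pow_succ]
    have h2 : n • (y ^ (n - 1) * z * y) = n • (y ^ n * z) := by
      cases n with
      | zero => simp
      | succ m =>
        congr 1
        rw [mul_assoc, ← hyz, ← mul_assoc, ← pow_succ]
        simp
    rw [h1, h2, Nat.add_sub_cancel, succ_nsmul, add_assoc, add_comm (y ^ n * z)]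

private lemma aux_main (hxz : x * z = z * x) (hyz : y * z = z * y)
    (hxy : x * y = y * x + z) (r t : ℕ) :
    x ^ r * y ^ t = ∑ i ∈ range (r + 1),
      (r.choose i * t.choose i * i.factorial) •
        (y ^ (t - i) * x ^ (r - i) * z ^ i) := by
  induction r with
  | zero => simp
  | succ r ih =>
    have hzx : ∀ m : ℕ, z * x ^ m = x ^ m * z := by
      intro m
      induction m with
      | zero => simp
      | succ m ihm => rw [pow_succ, ← mul_assoc, ihm, mul_assoc, ← hxz, ← mul_assoc]
    have h1 : x ^ (r + 1) * y ^ t = x * (x ^ r * y ^ t) := by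
      rw [← mul_assoc, ← pow_succ']
    rw [h1, ih, Finset.mul_sum]
    simp only [mul_smul_comm]
    have hterm : ∀ i ∈ range (r + 1),
        (r.choose i * t.choose i * i.factorial) •
          (x * (y ^ (t - i) * x ^ (r - i) * z ^ i))
        = (r.choose i * t.choose i * i.factorial) •
            (y ^ (t - i) * x ^ (r + 1 - i) * z ^ i)
          + (r.choose i * t.choose i * i.factorial * (t - i)) •
            (y ^ (t - (i + 1)) * x ^ (r - i) * z ^ (i + 1)) := by
      intro i hi
      have hi' : i ≤ r := Nat.lt_succ_iff.mp (Finset.mem_range.mp hi)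
      have hsplit : x * (y ^ (t - i) * x ^ (r - i) * z ^ i)
          = y ^ (t - i) * x ^ (r + 1 - i) * z ^ i
            + (t - i) • (y ^ (t - (i + 1)) * x ^ (r - i) * z ^ (i + 1)) := by
        rw [← mul_assoc, ← mul_assoc, aux_xys x y z hyz hxy (t - i)]
        rw [add_mul, add_mul, smul_mul_assoc, smul_mul_assoc]
        congr 1
        · have hr1 : r + 1 - i = r - i + 1 := by omega
          rw [mul_assoc (y ^ (t - i)) x (x ^ (r - i)), ← pow_succ', hr1]
        · congr 1
          have hts : t - i - 1 = t - (i + 1) := by omega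
          rw [hts, mul_assoc (y ^ (t - (i + 1))) z (x ^ (r - i)), hzx,
            ← mul_assoc, mul_assoc, ← pow_succ']
      rw [hsplit, smul_add, smul_smul]
    rw [Finset.sum_congr rfl hterm, Finset.sum_add_distrib]
    have hL : ∑ i ∈ range (r + 1),
        (r.choose i * t.choose i * i.factorial) •
          (y ^ (t - i) * x ^ (r + 1 - i) * z ^ i)
        = ∑ i ∈ range (r + 2),
        (r.choose i * t.choose i * i.factorial) •
          (y ^ (t - i) * x ^ (r + 1 - i) * z ^ i) := by
      rw [Finset.sum_range_succ (n := r + 1)]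
      simp [Nat.choose_succ_self]
    rw [hL, Finset.sum_range_succ' (n := r + 1)
      (f := fun i => (r.choose i * t.choose i * i.factorial) •
        (y ^ (t - i) * x ^ (r + 1 - i) * z ^ i))]
    rw [Finset.sum_range_succ' (n := r + 1)
      (f := fun i => ((r+1).choose i * t.choose i * i.factorial) •
        (y ^ (t - i) * x ^ (r + 1 - i) * z ^ i))]
    rw [add_right_comm, ← Finset.sum_add_distrib]
    congr 1
    · apply Finset.sum_congr rfl
      intro i _
      have hx1 : r + 1 - (i + 1) = r - i := by omega
      rw [hx1, ← add_smul]
      congr 1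
      have h2 : (r + 1).choose (i + 1) = r.choose i + r.choose (i + 1) :=
        Nat.choose_succ_succ r i
      have h3 : t.choose (i + 1) * (i + 1).factorial
          = t.choose i * i.factorial * (t - i) := by
        rw [Nat.factorial_succ, ← mul_assoc, Nat.choose_succ_right_eq]
        ring
      have h4 : r.choose i * t.choose i * i.factorial * (t - i)
          = r.choose i * (t.choose (i+1) * (i+1).factorial) := by
        rw [h3]; ring
      rw [h4, h2]; ring
    · simp

end Aux

/-- in an associative unital ℚ-algebra `A`, if `z := x*y − y*x` commutes with
both `x` and `y`, then for all `r, t ∈ ℕ`: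
`(x^r/r!) * (y^t/t!) = ∑_{i=0}^{min(r,t)} (y^{t−i}/(t−i)!) * (x^{r−i}/(r−i)!) * (z^i/i!)`. -/
theorem stmt_6 {A : Type*} [Ring A] [Algebra ℚ A] (x y : A)
    (hxz : x * (x * y - y * x) = (x * y - y * x) * x)
    (hyz : y * (x * y - y * x) = (x * y - y * x) * y)
    (r t : ℕ) :
    ((r.factorial : ℚ)⁻¹ • x ^ r) * ((t.factorial : ℚ)⁻¹ • y ^ t)
      = ∑ i ∈ Finset.range (min r t + 1),
          (((t - i).factorial : ℚ)⁻¹ • y ^ (t - i)) *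
            (((r - i).factorial : ℚ)⁻¹ • x ^ (r - i)) *
              ((i.factorial : ℚ)⁻¹ • (x * y - y * x) ^ i) := by
  have key := aux_main x y (x * y - y * x) hxz hyz (by abel) r t
  have hLHS : ((r.factorial : ℚ)⁻¹ • x ^ r) * ((t.factorial : ℚ)⁻¹ • y ^ t)
      = ((r.factorial : ℚ)⁻¹ * (t.factorial : ℚ)⁻¹) • (x ^ r * y ^ t) := by
    rw [smul_mul_assoc, mul_smul_comm, smul_smul]
  rw [hLHS, key, Finset.smul_sum]
  rw [← Finset.sum_subset (Finset.range_subset_range.mpr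
      (by omega : min r t + 1 ≤ r + 1))
      (by
        intro i hi hni
        have h1 : i ≤ r := Nat.lt_succ_iff.mp (Finset.mem_range.mp hi)
        have h2 : min r t < i := by
          by_contra h; exact hni (Finset.mem_range.mpr (by omega))
        have ht : t < i := by omega
        rw [Nat.choose_eq_zero_of_lt ht]
        simp)]
  apply Finset.sum_congr rfl
  intro i hi
  have h1 : i ≤ r := by have := Finset.mem_range.mp hi; omega
  have h2 : i ≤ t := by have := Finset.mem_range.mp hi; omega
  rw [← Nat.cast_smul_eq_nsmul ℚ]
  simp only [smul_mul_assoc, mul_smul_comm, smul_smul]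
  congr 1
  have hr := Nat.choose_mul_factorial_mul_factorial h1
  have ht := Nat.choose_mul_factorial_mul_factorial h2
  have hrne : (r.factorial : ℚ) ≠ 0 := Nat.cast_ne_zero.mpr r.factorial_ne_zero
  have htne : (t.factorial : ℚ) ≠ 0 := Nat.cast_ne_zero.mpr t.factorial_ne_zero
  have hrine : ((r - i).factorial : ℚ) ≠ 0 := Nat.cast_ne_zero.mpr (r - i).factorial_ne_zero
  have htine : ((t - i).factorial : ℚ) ≠ 0 := Nat.cast_ne_zero.mpr (t - i).factorial_ne_zero
  have hine : ((i).factorial : ℚ) ≠ 0 := Nat.cast_ne_zero.mpr i.factorial_ne_zero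
  field_simp
  push_cast [← hr, ← ht]
  ring
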